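/- arXiv:2007.12351 — 2 statements merged into one kernel-verified Lean document; each statement's English description precedes it below -/
import Mathlib

section
/- Let K be a field of characteristic 0, and let Q, P ∈ K[t] be polynomials with deg Q ≤ 2 and deg P ≤ 4. In K[t,x] set F := x² − Q(t)·x − P(t), and let D_F(g) := (∂F/∂x)·(∂g/∂t) − (∂F/∂t)·(∂g/∂x), so that D_F(t) = 2x − Q(t) and D_F(x) = Q'(t)·x + P'(t). For each natural number k, let M_k ⊆ K[t,x] be the K-linear span of the monomials {t^i : 0 ≤ i ≤ k} ∪ {t^j·x : 0 ≤ j ≤ k−2}. Then for every k and every g ∈ M_k, D_F(g) lies in M_{k+1} + (F), where (F) is the ideal generated by F. -/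
open MvPolynomial

private lemma pd0_aeval {K : Type*} [Field K] (R : Polynomial K) :
    pderiv 0 (Polynomial.aeval (X 0 : MvPolynomial (Fin 2) K) R)
      = Polynomial.aeval (X 0 : MvPolynomial (Fin 2) K) R.derivative := by
  induction R using Polynomial.induction_on' with
  | add p q hp hq => simp [hp, hq]
  | monomial n a =>
    cases n with
    | zero => simp [Polynomial.aeval_monomial]
    | succ m =>
      simp [Polynomial.aeval_monomial, Polynomial.derivative_monomial,
        Derivation.leibniz_pow, Algebra.smul_def, algebraMap_eq]
      ring

private lemma pd1_aeval {K : Type*} [Field K] (R : Polynomial K) :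
    pderiv 1 (Polynomial.aeval (X 0 : MvPolynomial (Fin 2) K) R) = 0 := by
  induction R using Polynomial.induction_on' with
  | add p q hp hq => simp [hp, hq]
  | monomial n a => simp [Polynomial.aeval_monomial, Derivation.leibniz_pow]

private lemma pd0_pow {K : Type*} [Field K] (m : ℕ) :
    pderiv 0 ((X 0 : MvPolynomial (Fin 2) K) ^ (m+1)) = (m+1 : ℕ) • X 0 ^ m := by
  simp [Derivation.leibniz_pow]

private lemma pd1_pow {K : Type*} [Field K] (m : ℕ) :
    pderiv 1 ((X 0 : MvPolynomial (Fin 2) K) ^ m) = 0 := by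
  simp [Derivation.leibniz_pow, pderiv_X, Pi.single_apply]

private noncomputable def OWspan (K : Type*) [Field K] (n : ℕ) : Submodule K (MvPolynomial (Fin 2) K) :=
  Submodule.span K
    ({a | ∃ i ≤ n, a = (X 0 : MvPolynomial (Fin 2) K) ^ i} ∪
     {a | ∃ j, j + 2 ≤ n ∧ a = (X 0 : MvPolynomial (Fin 2) K) ^ j * X 1})

private lemma mem_pow' {K : Type*} [Field K] {n i : ℕ} (h : i ≤ n) :
    (X 0 : MvPolynomial (Fin 2) K) ^ i ∈ OWspan K n :=
  Submodule.subset_span (Or.inl ⟨i, h, rfl⟩)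

private lemma mem_powX1' {K : Type*} [Field K] {n j : ℕ} (h : j + 2 ≤ n) :
    (X 0 : MvPolynomial (Fin 2) K) ^ j * X 1 ∈ OWspan K n :=
  Submodule.subset_span (Or.inr ⟨j, h, rfl⟩)

private lemma lemA {K : Type*} [Field K] {n d m : ℕ} (R : Polynomial K)
    (hR : R.degree ≤ (d : ℕ)) (h : d + m ≤ n) :
    Polynomial.aeval (X 0 : MvPolynomial (Fin 2) K) R * X 0 ^ m ∈ OWspan K n := by
  rw [Polynomial.aeval_eq_sum_range, Finset.sum_mul]
  refine Submodule.sum_mem _ fun i hi => ?_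
  rw [smul_mul_assoc, ← pow_add]
  refine Submodule.smul_mem _ _ (mem_pow' ?_)
  have := Polynomial.natDegree_le_iff_degree_le.mpr hR
  have hi' := Finset.mem_range.mp hi
  omega

private lemma lemB {K : Type*} [Field K] {n d m : ℕ} (R : Polynomial K)
    (hR : R.degree ≤ (d : ℕ)) (h : d + m + 2 ≤ n) :
    Polynomial.aeval (X 0 : MvPolynomial (Fin 2) K) R * (X 0 ^ m * X 1) ∈ OWspan K n := by
  rw [Polynomial.aeval_eq_sum_range, Finset.sum_mul]
  refine Submodule.sum_mem _ fun i hi => ?_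
  rw [smul_mul_assoc, ← mul_assoc, ← pow_add]
  refine Submodule.smul_mem _ _ (mem_powX1' ?_)
  have := Polynomial.natDegree_le_iff_degree_le.mpr hR
  have hi' := Finset.mem_range.mp hi
  omega

/-- Even case: for `F = x² - Q(t)x - P(t)` with `deg Q ≤ 2`, `deg P ≤ 4`, the derivation
`D_F(g) = (∂F/∂x)(∂g/∂t) - (∂F/∂t)(∂g/∂x)` maps the span `M_k` of
`{t^i : i ≤ k} ∪ {t^j x : j ≤ k-2}` into `M_{k+1} + (F)`. -/
theorem OW_derivation_even_filtration (K : Type*) [Field K] [CharZero K]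
    (Q P : Polynomial K) (hQ : Q.degree ≤ 2) (hP : P.degree ≤ 4)
    (F : MvPolynomial (Fin 2) K)
    (hF : F = X 1 ^ 2 - Polynomial.aeval (X 0 : MvPolynomial (Fin 2) K) Q * X 1
          - Polynomial.aeval (X 0 : MvPolynomial (Fin 2) K) P)
    (k : ℕ) (g : MvPolynomial (Fin 2) K)
    (hg : g ∈ Submodule.span K
      ({a | ∃ i ≤ k, a = (X 0 : MvPolynomial (Fin 2) K) ^ i} ∪
       {a | ∃ j, j + 2 ≤ k ∧ a = (X 0 : MvPolynomial (Fin 2) K) ^ j * X 1})) :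
    pderiv 1 F * pderiv 0 g - pderiv 0 F * pderiv 1 g ∈
      Submodule.span K
        ({a | ∃ i ≤ k + 1, a = (X 0 : MvPolynomial (Fin 2) K) ^ i} ∪
         {a | ∃ j, j + 2 ≤ k + 1 ∧ a = (X 0 : MvPolynomial (Fin 2) K) ^ j * X 1}) ⊔
      Submodule.restrictScalars K (Ideal.span {F}) := by
  have hQ2 : Q.degree ≤ ((2 : ℕ) : WithBot ℕ) := by exact_mod_cast hQ
  have hP4 : P.degree ≤ ((4 : ℕ) : WithBot ℕ) := by exact_mod_cast hP
  set aQ := Polynomial.aeval (X 0 : MvPolynomial (Fin 2) K) Q with haQ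
  set aP := Polynomial.aeval (X 0 : MvPolynomial (Fin 2) K) P with haP
  set aQ' := Polynomial.aeval (X 0 : MvPolynomial (Fin 2) K) Q.derivative with haQ'
  set aP' := Polynomial.aeval (X 0 : MvPolynomial (Fin 2) K) P.derivative with haP'
  have hQ' : Q.derivative.degree ≤ (1 : ℕ) := by
    rw [← Polynomial.natDegree_le_iff_degree_le]
    have h1 := Polynomial.natDegree_derivative_le Q
    have h2 : Q.natDegree ≤ 2 := Polynomial.natDegree_le_iff_degree_le.mpr hQ
    omega
  have hP' : P.derivative.degree ≤ (3 : ℕ) := by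
    rw [← Polynomial.natDegree_le_iff_degree_le]
    have h1 := Polynomial.natDegree_derivative_le P
    have h2 : P.natDegree ≤ 4 := Polynomial.natDegree_le_iff_degree_le.mpr hP
    omega
  have hF1 : pderiv 1 F = 2 • (X 1) - aQ := by
    rw [hF, haQ, haP]; simp [Derivation.leibniz_pow, pd1_aeval]
  have hF0 : pderiv 0 F = -(aQ' * X 1) - aP' := by
    rw [hF, haQ, haP, haQ', haP']
    simp [Derivation.leibniz_pow, pd0_aeval, pd1_pow]
    ring
  set T := OWspan K (k + 1) ⊔
      Submodule.restrictScalars K (Ideal.span {F}) with hT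
  show _ ∈ T
  induction hg using Submodule.span_induction with
  | zero => simp [zero_mem]
  | add x y hx hy px py =>
    have : pderiv 1 F * pderiv 0 (x + y) - pderiv 0 F * pderiv 1 (x + y) =
        (pderiv 1 F * pderiv 0 x - pderiv 0 F * pderiv 1 x) +
        (pderiv 1 F * pderiv 0 y - pderiv 0 F * pderiv 1 y) := by
      simp only [map_add]; ring
    rw [this]; exact add_mem px py
  | smul a x hx px =>
    have : pderiv 1 F * pderiv 0 (a • x) - pderiv 0 F * pderiv 1 (a • x) =
        a • (pderiv 1 F * pderiv 0 x - pderiv 0 F * pderiv 1 x) := by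
      simp only [Derivation.map_smul, smul_sub, mul_smul_comm]
    rw [this]; exact Submodule.smul_mem _ _ px
  | mem x hx =>
    rcases hx with ⟨i, hi, rfl⟩ | ⟨j, hj, rfl⟩
    · -- g = X0^i
      cases i with
      | zero => simp [zero_mem]
      | succ m =>
        rw [pd0_pow, pd1_pow, mul_zero, sub_zero, hF1]
        have : ((2 : ℕ) • (X 1) - aQ) * ((m+1 : ℕ) • (X 0 : MvPolynomial (Fin 2) K) ^ m)
            = (m+1 : ℕ) • ((2:ℕ) • ((X 0 : MvPolynomial (Fin 2) K) ^ m * X 1))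
              - (m+1 : ℕ) • (aQ * X 0 ^ m) := by
          simp only [nsmul_eq_mul]; push_cast; ring
        rw [this]
        refine Submodule.mem_sup_left (sub_mem (nsmul_mem (nsmul_mem ?_ 2) _)
          (nsmul_mem ?_ _))
        · exact mem_powX1' (by omega)
        · exact lemA Q hQ2 (by omega)
    · -- g = X0^j * X1
      have hx1 : pderiv 1 ((X 0 : MvPolynomial (Fin 2) K) ^ j * X 1) = X 0 ^ j := by
        simp [pd1_pow]
      have hx0 : pderiv 0 ((X 0 : MvPolynomial (Fin 2) K) ^ j * X 1)
          = pderiv 0 ((X 0 : MvPolynomial (Fin 2) K) ^ j) * X 1 := by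
        rw [Derivation.leibniz]
        simp [smul_eq_mul, mul_comm]
      cases j with
      | zero =>
        rw [hx1, hx0, hF0]
        have : pderiv 1 F * (pderiv 0 ((X 0 : MvPolynomial (Fin 2) K) ^ 0) * X 1)
            - (-(aQ' * X 1) - aP') * X 0 ^ 0
            = aQ' * ((X 0 : MvPolynomial (Fin 2) K) ^ 0 * X 1) + aP' * X 0 ^ 0 := by
          simp only [pow_zero, Derivation.map_one_eq_zero, zero_mul, mul_zero]
          ring
        rw [this]
        exact Submodule.mem_sup_left (add_mem (lemB Q.derivative hQ' (by omega))
          (lemA P.derivative hP' (by omega)))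
      | succ m =>
        rw [hx1, hx0, pd0_pow, hF1, hF0]
        have key : ((2:ℕ) • (X 1) - aQ) * (((m+1:ℕ) • (X 0 : MvPolynomial (Fin 2) K) ^ m) * X 1)
            - (-(aQ' * X 1) - aP') * X 0 ^ (m+1)
            = (2*(m+1) : ℕ) • ((X 0 : MvPolynomial (Fin 2) K) ^ m * F)
              + ((m+1 : ℕ) • (aQ * (X 0 ^ m * X 1)) + (2*(m+1) : ℕ) • (aP * X 0 ^ m)
                + aQ' * (X 0 ^ (m+1) * X 1) + aP' * X 0 ^ (m+1)) := by
          rw [hF, haQ, haP]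
          simp only [nsmul_eq_mul]; push_cast; ring
        rw [key]
        refine add_mem (Submodule.mem_sup_right (nsmul_mem ?_ _)) (Submodule.mem_sup_left ?_)
        · exact Ideal.mul_mem_left _ _ (Ideal.subset_span rfl)
        · refine add_mem (add_mem (add_mem (nsmul_mem ?_ _) (nsmul_mem ?_ _)) ?_) ?_
          · exact lemB Q hQ2 (by omega)
          · exact lemA P hP4 (by omega)
          · exact lemB Q.derivative hQ' (by omega)
          · exact lemA P.derivative hP' (by omega)
end

section
/- Let K be a field of characteristic 0, c ∈ K, and Q, P ∈ K[t] with deg Q ≤ 2 and deg P ≤ 3. In K[t,x] set F := (t+c)·x² − Q(t)·x − P(t), and let D_F(g) := (∂F/∂x)·(∂g/∂t) − (∂F/∂t)·(∂g/∂x), so that D_F(t) = 2(t+c)x − Q(t) and D_F(x) = P'(t) + Q'(t)x − x². For each natural number k ≥ 1, let M'_k ⊆ K[t,x] be the K-span of {t^i : 0 ≤ i ≤ k} ∪ {t^j·x : 0 ≤ j ≤ k−1}, and let N_{k+1} ⊆ K[t,x] be the K-span of {t^i : 0 ≤ i ≤ k+1} ∪ {t^j·x : 0 ≤ j ≤ k}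 ∪ {x²}. Then for every g ∈ M'_k, D_F(g) lies in N_{k+1} + (F), where (F) is the ideal generated by F. -/
open MvPolynomial

lemma pderiv0_aeval {K : Type*} [CommRing K] (R : Polynomial K) :
    pderiv (0 : Fin 2) (Polynomial.aeval (X 0 : MvPolynomial (Fin 2) K) R)
      = Polynomial.aeval (X 0 : MvPolynomial (Fin 2) K) R.derivative := by
  induction R using Polynomial.induction_on' with
  | add p q hp hq => simp [hp, hq]
  | monomial n a =>
    simp [Polynomial.aeval_monomial, Polynomial.derivative_monomial, pderiv_pow,
      Polynomial.aeval_X, mul_comm, mul_assoc, mul_left_comm]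

lemma pderiv1_aeval {K : Type*} [CommRing K] (R : Polynomial K) :
    pderiv (1 : Fin 2) (Polynomial.aeval (X 0 : MvPolynomial (Fin 2) K) R) = 0 := by
  induction R using Polynomial.induction_on' with
  | add p q hp hq => simp [hp, hq]
  | monomial n a =>
    simp [Polynomial.aeval_monomial, pderiv_pow, pderiv_X_of_ne (show (0:Fin 2) ≠ 1 by decide)]

lemma mem_spanT {K : Type*} [CommRing K] (n : ℕ) (R : Polynomial K) (hR : R.natDegree ≤ n) :
    Polynomial.aeval (X 0 : MvPolynomial (Fin 2) K) R ∈
      Submodule.span K {a | ∃ i ≤ n, a = (X 0 : MvPolynomial (Fin 2) K) ^ i} := by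
  rw [Polynomial.aeval_eq_sum_range' (Nat.lt_succ_of_le hR)]
  refine Submodule.sum_mem _ fun i hi => Submodule.smul_mem _ _ ?_
  exact Submodule.subset_span ⟨i, Nat.lt_succ_iff.mp (Finset.mem_range.mp hi), rfl⟩

lemma mem_spanTx {K : Type*} [CommRing K] (n : ℕ) (R : Polynomial K) (hR : R.natDegree ≤ n) :
    Polynomial.aeval (X 0 : MvPolynomial (Fin 2) K) R * X 1 ∈
      Submodule.span K {a | ∃ j, j ≤ n ∧ a = (X 0 : MvPolynomial (Fin 2) K) ^ j * X 1} := by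
  rw [Polynomial.aeval_eq_sum_range' (Nat.lt_succ_of_le hR), Finset.sum_mul]
  refine Submodule.sum_mem _ fun i hi => ?_
  rw [smul_mul_assoc]
  exact Submodule.smul_mem _ _
    (Submodule.subset_span ⟨i, Nat.lt_succ_iff.mp (Finset.mem_range.mp hi), rfl⟩)

noncomputable def sdiv {K : Type*} [CommRing K] (c : K) : ℕ → Polynomial K
  | 0 => 0
  | m+1 => Polynomial.X ^ m + Polynomial.C (-c) * sdiv c m

lemma sdiv_natDegree {K : Type*} [CommRing K] (c : K) : ∀ m, (sdiv c m).natDegree ≤ m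
  | 0 => by simp [sdiv]
  | m+1 => by
    simp only [sdiv]
    refine (Polynomial.natDegree_add_le _ _).trans (max_le ?_ ?_)
    · exact (Polynomial.natDegree_X_pow_le m).trans (Nat.le_succ m)
    · exact (Polynomial.natDegree_mul_le).trans
        (by simpa using (sdiv_natDegree c m).trans (Nat.le_succ m))

lemma sdiv_spec {K : Type*} [CommRing K] (c : K) :
    ∀ m, (Polynomial.X + Polynomial.C c) * sdiv c m + Polynomial.C ((-c)^m)
      = (Polynomial.X : Polynomial K) ^ m
  | 0 => by simp [sdiv]
  | m+1 => by
    have h := sdiv_spec c m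
    simp only [sdiv, map_pow, map_neg] at h ⊢
    linear_combination (-Polynomial.C c) * h

lemma sdiv_natDegree' {K : Type*} [CommRing K] (c : K) :
    ∀ m, (sdiv c (m+1)).natDegree ≤ m
  | 0 => by simp [sdiv]
  | m+1 => by
    rw [sdiv]
    refine (Polynomial.natDegree_add_le _ _).trans (max_le ?_ ?_)
    · exact Polynomial.natDegree_X_pow_le (m+1)
    · refine (Polynomial.natDegree_mul_le).trans ?_
      have h2 := sdiv_natDegree' c m
      have h3 : (Polynomial.C (-c)).natDegree = 0 := Polynomial.natDegree_C _
      omega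

/-- Odd case: for `F = (t+c)x² - Q(t)x - P(t)` with `deg Q ≤ 2`, `deg P ≤ 3`, the
derivation `D_F(g) = (∂F/∂x)(∂g/∂t) - (∂F/∂t)(∂g/∂x)` maps the span `M'_k` of
`{t^i : i ≤ k} ∪ {t^j x : j ≤ k-1}` into `N_{k+1} + (F)`, where `N_{k+1}` is spanned by
`{t^i : i ≤ k+1} ∪ {t^j x : j ≤ k} ∪ {x²}`. -/
theorem OW_derivation_odd_filtration (K : Type*) [Field K] [CharZero K]
    (c : K) (Q P : Polynomial K) (hQ : Q.degree ≤ 2) (hP : P.degree ≤ 3)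
    (F : MvPolynomial (Fin 2) K)
    (hF : F = (X 0 + C c) * X 1 ^ 2
          - Polynomial.aeval (X 0 : MvPolynomial (Fin 2) K) Q * X 1
          - Polynomial.aeval (X 0 : MvPolynomial (Fin 2) K) P)
    (k : ℕ) (hk : 1 ≤ k) (g : MvPolynomial (Fin 2) K)
    (hg : g ∈ Submodule.span K
      ({a | ∃ i ≤ k, a = (X 0 : MvPolynomial (Fin 2) K) ^ i} ∪
       {a | ∃ j, j + 1 ≤ k ∧ a = (X 0 : MvPolynomial (Fin 2) K) ^ j * X 1})) :
    pderiv 1 F * pderiv 0 g - pderiv 0 F * pderiv 1 g ∈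
      Submodule.span K
        ({a | ∃ i ≤ k + 1, a = (X 0 : MvPolynomial (Fin 2) K) ^ i} ∪
         {a | ∃ j, j ≤ k ∧ a = (X 0 : MvPolynomial (Fin 2) K) ^ j * X 1} ∪
         {(X 1 : MvPolynomial (Fin 2) K) ^ 2}) ⊔
      Submodule.restrictScalars K (Ideal.span {F}) := by
  set t : MvPolynomial (Fin 2) K := X 0 with ht
  set x : MvPolynomial (Fin 2) K := X 1 with hx
  set NN := Submodule.span K
        ({a | ∃ i ≤ k + 1, a = t ^ i} ∪
         {a | ∃ j, j ≤ k ∧ a = t ^ j * x} ∪ {x ^ 2}) ⊔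
      Submodule.restrictScalars K (Ideal.span {F}) with hNN
  have hQn : Q.natDegree ≤ 2 := Polynomial.natDegree_le_iff_degree_le.mpr hQ
  have hPn : P.natDegree ≤ 3 := Polynomial.natDegree_le_iff_degree_le.mpr hP
  -- inclusions into NN
  have hT : ∀ R : Polynomial K, R.natDegree ≤ k + 1 →
      Polynomial.aeval t R ∈ NN := fun R hR => by
    refine Submodule.mem_sup_left (Submodule.span_mono ?_ (mem_spanT (k+1) R hR))
    exact fun a ha => Or.inl (Or.inl ha)
  have hTx : ∀ R : Polynomial K, R.natDegree ≤ k →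
      Polynomial.aeval t R * x ∈ NN := fun R hR => by
    refine Submodule.mem_sup_left (Submodule.span_mono ?_ (mem_spanTx k R hR))
    exact fun a ha => Or.inl (Or.inr ha)
  have hx2 : (x ^ 2 : MvPolynomial (Fin 2) K) ∈ NN :=
    Submodule.mem_sup_left (Submodule.subset_span (Or.inr rfl))
  have hFm : F ∈ NN :=
    Submodule.mem_sup_right (Ideal.subset_span rfl)
  have hp0t : pderiv 0 t = 1 := pderiv_X_self 0
  have hp1t : pderiv 1 t = 0 := pderiv_X_of_ne (by decide)
  have hp0x : pderiv 0 x = 0 := pderiv_X_of_ne (by decide)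
  have hp1x : pderiv 1 x = 1 := pderiv_X_self 1
  -- pderiv of F
  have hF1 : pderiv 1 F = 2 * (t + C c) * x - Polynomial.aeval t Q := by
    rw [hF]
    simp [pderiv_mul, pderiv1_aeval, hp1t, hp1x, pderiv_pow]
    ring
  have hF0 : pderiv 0 F = x ^ 2 - Polynomial.aeval t Q.derivative * x
      - Polynomial.aeval t P.derivative := by
    rw [hF]
    simp [pderiv_mul, pderiv0_aeval, hp0t, hp0x, pderiv_pow]
    ring
  have hC : ∀ (a : K) (p : MvPolynomial (Fin 2) K), p ∈ NN → C a * p ∈ NN := by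
    intro a p hp
    rw [← smul_eq_C_mul]
    exact Submodule.smul_mem _ _ hp
  have hgen : ∀ n ≤ k, t ^ n * x ∈ NN := fun n hn =>
    Submodule.mem_sup_left (Submodule.subset_span (Or.inl (Or.inr ⟨n, hn, rfl⟩)))
  have hTm : ∀ (R : Polynomial K) (n : ℕ), R.natDegree + n ≤ k + 1 →
      Polynomial.aeval t R * t ^ n ∈ NN := by
    intro R n h
    have hb : (R * Polynomial.X ^ n).natDegree ≤ k + 1 :=
      (Polynomial.natDegree_mul_le).trans
        (le_trans (Nat.add_le_add_left (Polynomial.natDegree_X_pow_le n) _) h)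
    simpa [map_mul, map_pow, Polynomial.aeval_X] using hT (R * Polynomial.X ^ n) hb
  have hTxm : ∀ (R : Polynomial K) (n : ℕ), R.natDegree + n ≤ k →
      Polynomial.aeval t R * (t ^ n * x) ∈ NN := by
    intro R n h
    have hb : (R * Polynomial.X ^ n).natDegree ≤ k :=
      (Polynomial.natDegree_mul_le).trans
        (le_trans (Nat.add_le_add_left (Polynomial.natDegree_X_pow_le n) _) h)
    simpa [map_mul, map_pow, Polynomial.aeval_X, mul_assoc] using
      hTx (R * Polynomial.X ^ n) hb
  induction hg using Submodule.span_induction with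
  | zero => simpa using Submodule.zero_mem NN
  | add u v hu hv hu' hv' =>
    have : pderiv 1 F * pderiv 0 (u + v) - pderiv 0 F * pderiv 1 (u + v)
        = (pderiv 1 F * pderiv 0 u - pderiv 0 F * pderiv 1 u)
          + (pderiv 1 F * pderiv 0 v - pderiv 0 F * pderiv 1 v) := by
      simp only [map_add]; ring
    rw [this]; exact Submodule.add_mem _ hu' hv'
  | smul a u hu hu' =>
    have : pderiv 1 F * pderiv 0 (a • u) - pderiv 0 F * pderiv 1 (a • u)
        = a • (pderiv 1 F * pderiv 0 u - pderiv 0 F * pderiv 1 u) := by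
      rw [smul_eq_C_mul, pderiv_C_mul, pderiv_C_mul, smul_eq_C_mul]; ring
    rw [this]; exact Submodule.smul_mem _ _ hu'
  | mem a ha =>
    rcases ha with ⟨i, hi, rfl⟩ | ⟨j, hj, rfl⟩
    · obtain _ | m := i
      · simp only [pow_zero, map_one, pderiv_one, mul_zero, sub_zero]
        exact Submodule.zero_mem NN
      · have d0 : pderiv 0 (t ^ (m+1)) = ((m+1 : ℕ) : MvPolynomial (Fin 2) K) * t ^ m := by
          simp [pderiv_pow, hp0t]
        have d1 : pderiv 1 (t ^ (m+1)) = 0 := by simp [pderiv_pow, hp1t]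
        have e : pderiv 1 F * pderiv 0 (t ^ (m+1)) - pderiv 0 F * pderiv 1 (t ^ (m+1))
            = C (2*((m:K)+1)) * (t ^ (m+1) * x) + C (2*((m:K)+1)*c) * (t ^ m * x)
              - C ((m:K)+1) * (Polynomial.aeval t Q * t ^ m) := by
          rw [hF1, d0, d1]
          simp only [map_mul, map_add, map_one, map_natCast, map_ofNat]
          push_cast
          ring
        rw [e]
        refine Submodule.sub_mem _ (Submodule.add_mem _ ?_ ?_) ?_
        · exact hC _ _ (hgen (m+1) hi)
        · exact hC _ _ (hgen m (le_trans (Nat.le_succ m) hi))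
        · exact hC _ _ (hTm Q m (by omega))
    · obtain _ | m := j
      · -- g = x
        have e : pderiv 1 F * pderiv 0 (t ^ 0 * x) - pderiv 0 F * pderiv 1 (t ^ 0 * x)
            = -(x ^ 2) + Polynomial.aeval t Q.derivative * x
              + Polynomial.aeval t P.derivative := by
          rw [hF0]
          simp only [pow_zero, one_mul, hp0x, hp1x, mul_zero, mul_one, zero_sub]
          ring
        rw [e]
        refine Submodule.add_mem _ (Submodule.add_mem _ (Submodule.neg_mem _ hx2) ?_) ?_
        · exact hTx Q.derivative (le_trans (Polynomial.natDegree_derivative_le Q) (by omega))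
        · exact hT P.derivative (le_trans (Polynomial.natDegree_derivative_le P) (by omega))
      · -- g = t^(m+1) * x, with m+2 ≤ k
        have d0 : pderiv 0 (t ^ (m+1) * x) = ((m+1 : ℕ) : MvPolynomial (Fin 2) K) * (t ^ m * x) := by
          rw [pderiv_mul]
          simp [pderiv_pow, hp0t, hp0x]
          ring
        have d1 : pderiv 1 (t ^ (m+1) * x) = t ^ (m+1) := by
          rw [pderiv_mul]
          simp [pderiv_pow, hp1t, hp1x]
        set s' : MvPolynomial (Fin 2) K := Polynomial.aeval t (sdiv c (m+1)) with hs'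
        have hsd : (t + C c) * s' + C ((-c) ^ (m+1)) = t ^ (m+1) := by
          have h := congrArg (Polynomial.aeval t) (sdiv_spec c (m+1))
          simpa [map_add, map_mul, map_pow, Polynomial.aeval_X, Polynomial.aeval_C,
            algebraMap_eq] using h
        have e : pderiv 1 F * pderiv 0 (t ^ (m+1) * x) - pderiv 0 F * pderiv 1 (t ^ (m+1) * x)
            = (C (2*((m:K)+1)) * t ^ m - s') * F
              + ((C (2*((m:K)+1)) * t ^ m - s') * (Polynomial.aeval t Q * x)
                + (C (2*((m:K)+1)) * t ^ m - s') * Polynomial.aeval t P)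
              - C ((-c) ^ (m+1)) * x ^ 2
              - C ((m:K)+1) * (Polynomial.aeval t Q * (t ^ m * x))
              + Polynomial.aeval t Q.derivative * (t ^ (m+1) * x)
              + Polynomial.aeval t P.derivative * t ^ (m+1) := by
          rw [hF0, hF1, d0, d1]
          simp only [map_mul, map_add, map_one, map_natCast, map_ofNat]
          push_cast
          linear_combination
            (-(2 * (((m : ℕ) : MvPolynomial (Fin 2) K) + 1) * t ^ m - s')) * hF
            + (x ^ 2) * hsd
        rw [e]
        have hU : Polynomial.aeval t
            (Polynomial.C (2*((m:K)+1)) * Polynomial.X ^ m - sdiv c (m+1))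
            = C (2*((m:K)+1)) * t ^ m - s' := by
          simp [map_sub, map_mul, map_pow, Polynomial.aeval_X, Polynomial.aeval_C,
            algebraMap_eq, hs']
        set U : Polynomial K :=
          Polynomial.C (2*((m:K)+1)) * Polynomial.X ^ m - sdiv c (m+1) with hUdef
        have hUdeg : U.natDegree ≤ m := by
          refine (Polynomial.natDegree_sub_le _ _).trans (max_le ?_ (sdiv_natDegree' c m))
          exact (Polynomial.natDegree_C_mul_le _ _).trans (Polynomial.natDegree_X_pow_le m)
        refine Submodule.add_mem _ (Submodule.add_mem _ (Submodule.sub_mem _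
          (Submodule.sub_mem _ (Submodule.add_mem _ ?_ (Submodule.add_mem _ ?_ ?_)) ?_) ?_)
          ?_) ?_
        · -- (U) * F ∈ ideal
          exact Submodule.mem_sup_right (Ideal.mul_mem_left _ _ (Ideal.subset_span rfl))
        · -- U * (Q x)
          have := hTx (U * Q) ((Polynomial.natDegree_mul_le).trans (by omega))
          rw [map_mul, hU] at this
          simpa [mul_assoc] using this
        · -- U * P
          have := hT (U * P) ((Polynomial.natDegree_mul_le).trans (by omega))
          rw [map_mul, hU] at this
          exact this
        · exact hC _ _ hx2
        · exact hC _ _ (hTxm Q m (by omega))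
        · exact hTxm Q.derivative (m+1)
            (by have := Polynomial.natDegree_derivative_le Q; omega)
        · exact hTm P.derivative (m+1)
            (by have := Polynomial.natDegree_derivative_le P; omega)
end
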